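/- Let H be a real Hilbert space, T_l : H → H a bounded linear operator with ‖T_l‖ ≤ 1, z ∈ H, and define the affine operator T x := T_l x + z. Let φ̄ be a fixed point of T, (d_k) a sequence in [0,1], and (φ_k) the segmenting Mann iteration φ_{k+1} := (1 − d_k) φ_k + d_k T(φ_k) starting from an arbitrary φ₁ ∈ H. If there exist ε > 0 and k₀ ∈ ℕ with ‖T(φ_k) − φ_k‖ ≥ ε for all k ≥ k₀, then there exists a constant c > 0 (depending only on ε and ‖φ₁ − φ̄‖) such that ‖φ_{k+1} − φ̄‖ ≤ (1 − c d_k (1 − d_k)) ‖φ_k − φ̄‖ for all k ≥ k₀. -/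

import Mathlib

set_option maxHeartbeats 1000000 in
/-- **Convexity lemma.** Let `H` be a real Hilbert space, `T_l` a bounded linear operator
with `‖T_l‖ ≤ 1`, `T x = T_l x + z` an affine operator with fixed point `φ̄`, and `(φ k)`
the segmenting Mann iteration starting from `φ 1`. If `‖T (φ k) - φ k‖ ≥ ε` for all
`k ≥ k₀`, then there is `c > 0` with
`‖φ (k+1) - φ̄‖ ≤ (1 - c * d k * (1 - d k)) * ‖φ k - φ̄‖` for all `k ≥ k₀`. -/
theorem mann_mazya_convexity_lemma
    {H : Type*} [NormedAddCommGroup H] [InnerProductSpace ℝ H] [CompleteSpace H]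
    (Tl : H →L[ℝ] H) (hTl : ‖Tl‖ ≤ 1) (z : H)
    (φbar : H) (hfix : φbar = Tl φbar + z)
    (d : ℕ → ℝ) (hd : ∀ k, d k ∈ Set.Icc (0 : ℝ) 1)
    (φ : ℕ → H)
    (hrec : ∀ k, 1 ≤ k → φ (k + 1) = (1 - d k) • φ k + d k • (Tl (φ k) + z))
    (ε : ℝ) (hε : 0 < ε) (k₀ : ℕ) (hk₀ : 1 ≤ k₀)
    (hbig : ∀ k, k₀ ≤ k → ε ≤ ‖(Tl (φ k) + z) - φ k‖) :
    ∃ c > 0, ∀ k, k₀ ≤ k →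
      ‖φ (k + 1) - φbar‖ ≤ (1 - c * d k * (1 - d k)) * ‖φ k - φbar‖ := by
  -- translate the affine map to its linear part
  have key : ∀ x : H, Tl x + z - φbar = Tl (x - φbar) := by
    intro x
    rw [map_sub]
    nth_rewrite 1 [hfix]
    abel
  have contract : ∀ x : H, ‖Tl x‖ ≤ ‖x‖ := by
    intro x
    calc ‖Tl x‖ ≤ ‖Tl‖ * ‖x‖ := Tl.le_opNorm x
      _ ≤ 1 * ‖x‖ := mul_le_mul_of_nonneg_right hTl (norm_nonneg x)
      _ = ‖x‖ := one_mul _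
  have step : ∀ k, 1 ≤ k →
      φ (k + 1) - φbar = (1 - d k) • (φ k - φbar) + d k • Tl (φ k - φbar) := by
    intro k hk
    rw [hrec k hk, ← key]
    module
  have mono : ∀ k, 1 ≤ k → ‖φ (k + 1) - φbar‖ ≤ ‖φ k - φbar‖ := by
    intro k hk
    obtain ⟨hd0, hd1⟩ := hd k
    rw [step k hk]
    calc ‖(1 - d k) • (φ k - φbar) + d k • Tl (φ k - φbar)‖
        ≤ ‖(1 - d k) • (φ k - φbar)‖ + ‖d k • Tl (φ k - φbar)‖ := norm_add_le _ _
      _ = |1 - d k| * ‖φ k - φbar‖ + |d k| * ‖Tl (φ k - φbar)‖ := by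
          rw [norm_smul, norm_smul, Real.norm_eq_abs, Real.norm_eq_abs]
      _ ≤ (1 - d k) * ‖φ k - φbar‖ + d k * ‖φ k - φbar‖ := by
          rw [abs_of_nonneg (by linarith), abs_of_nonneg hd0]
          have := contract (φ k - φbar)
          nlinarith [norm_nonneg (φ k - φbar)]
      _ = ‖φ k - φbar‖ := by ring
  have bound : ∀ k, 1 ≤ k → ‖φ k - φbar‖ ≤ ‖φ 1 - φbar‖ := by
    intro k hk
    induction k with
    | zero => omega
    | succ n ih =>
      rcases Nat.lt_or_ge 1 (n + 1) with h | h
      · have hn : 1 ≤ n := by omega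
        exact (mono n hn).trans (ih hn)
      · have hn : n = 0 := by omega
        subst hn
        simp
  set M := ‖φ 1 - φbar‖ with hM
  have hMε : ε ≤ 2 * M := by
    have h1 := hbig k₀ le_rfl
    have h2 : Tl (φ k₀) + z - φ k₀ = Tl (φ k₀ - φbar) - (φ k₀ - φbar) := by
      rw [← key]; abel
    rw [h2] at h1
    have h3 : ‖Tl (φ k₀ - φbar) - (φ k₀ - φbar)‖ ≤ ‖Tl (φ k₀ - φbar)‖ + ‖φ k₀ - φbar‖ :=
      norm_sub_le _ _
    have h4 := contract (φ k₀ - φbar)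
    have h5 := bound k₀ hk₀
    linarith
  have hMpos : 0 < M := by linarith
  have hcpos : (0 : ℝ) < ε ^ 2 / (2 * M ^ 2) := by
    apply div_pos (by positivity)
    nlinarith
  refine ⟨ε ^ 2 / (2 * M ^ 2), hcpos, ?_⟩
  intro k hk
  have hk1 : 1 ≤ k := le_trans hk₀ hk
  obtain ⟨hd0, hd1⟩ := hd k
  set c := ε ^ 2 / (2 * M ^ 2) with hc
  set e := φ k - φbar with he
  set N := ‖e‖ with hN
  have hNM : N ≤ M := bound k hk1
  have hN0 : 0 ≤ N := norm_nonneg _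
  -- squared norm of convex combination
  have sq_id : ‖(1 - d k) • e + d k • Tl e‖ ^ 2
      = (1 - d k) * N ^ 2 + d k * ‖Tl e‖ ^ 2 - d k * (1 - d k) * ‖e - Tl e‖ ^ 2 := by
    have h1 : ‖(1 - d k) • e + d k • Tl e‖ ^ 2
        = ‖(1 - d k) • e‖ ^ 2 + 2 * inner ℝ ((1 - d k) • e) (d k • Tl e) + ‖d k • Tl e‖ ^ 2 :=
      norm_add_sq_real _ _
    have h2 : ‖e - Tl e‖ ^ 2 = ‖e‖ ^ 2 - 2 * inner ℝ e (Tl e) + ‖Tl e‖ ^ 2 :=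
      norm_sub_sq_real e (Tl e)
    have h3 : ‖(1 - d k) • e‖ ^ 2 = (1 - d k) ^ 2 * ‖e‖ ^ 2 := by
      rw [norm_smul, mul_pow, Real.norm_eq_abs, sq_abs]
    have h4 : ‖d k • Tl e‖ ^ 2 = d k ^ 2 * ‖Tl e‖ ^ 2 := by
      rw [norm_smul, mul_pow, Real.norm_eq_abs, sq_abs]
    rw [h1, h3, h4, real_inner_smul_left, real_inner_smul_right]
    rw [hN]
    linear_combination (d k * (1 - d k)) * h2
  have hbig' : ε ≤ ‖e - Tl e‖ := by
    have h1 := hbig k hk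
    have h2 : Tl (φ k) + z - φ k = Tl e - e := by rw [← key, he]; abel
    rw [h2] at h1
    rwa [← norm_neg, neg_sub] at h1
  have hTle : ‖Tl e‖ ≤ N := contract e
  set t := d k * (1 - d k) with ht
  have ht0 : 0 ≤ t := mul_nonneg hd0 (by linarith)
  have sq_bound : ‖φ (k + 1) - φbar‖ ^ 2 ≤ N ^ 2 - t * ε ^ 2 := by
    rw [step k hk1, ← he, sq_id]
    have hA : d k * ‖Tl e‖ ^ 2 ≤ d k * N ^ 2 :=
      mul_le_mul_of_nonneg_left (pow_le_pow_left₀ (norm_nonneg _) hTle 2) hd0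
    have hB : t * ε ^ 2 ≤ t * ‖e - Tl e‖ ^ 2 :=
      mul_le_mul_of_nonneg_left (pow_le_pow_left₀ (le_of_lt hε) hbig' 2) ht0
    linarith
  have hct : c * t ≤ 1 / 2 := by
    have h1 : t ≤ 1 / 4 := by nlinarith [sq_nonneg (2 * d k - 1)]
    have h2 : c ≤ 2 := by
      rw [hc, div_le_iff₀ (by positivity)]
      nlinarith
    nlinarith
  have hcMsq : c * M ^ 2 = ε ^ 2 / 2 := by
    rw [hc]
    field_simp
  have h2 : 2 * c * N ^ 2 ≤ ε ^ 2 := by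
    have hcN : c * N ^ 2 ≤ c * M ^ 2 :=
      mul_le_mul_of_nonneg_left (by nlinarith) (le_of_lt hcpos)
    linarith [hcMsq ▸ hcN]
  have h3 : 2 * (c * t) * N ^ 2 ≤ t * ε ^ 2 := by
    have := mul_le_mul_of_nonneg_left h2 ht0
    nlinarith
  have hrhs0 : 0 ≤ (1 - c * d k * (1 - d k)) * N := by
    have : c * d k * (1 - d k) = c * t := by rw [ht]; ring
    apply mul_nonneg (by linarith [this ▸ hct]) hN0
  have key2 : ‖φ (k + 1) - φbar‖ ^ 2 ≤ ((1 - c * d k * (1 - d k)) * N) ^ 2 := by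
    have hRHS : ((1 - c * d k * (1 - d k)) * N) ^ 2
        = N ^ 2 - 2 * (c * t) * N ^ 2 + (c * t * N) ^ 2 := by rw [ht]; ring
    rw [hRHS]
    have := sq_nonneg (c * t * N)
    linarith
  calc ‖φ (k + 1) - φbar‖
      = √(‖φ (k + 1) - φbar‖ ^ 2) := by rw [Real.sqrt_sq (norm_nonneg _)]
    _ ≤ √(((1 - c * d k * (1 - d k)) * N) ^ 2) := Real.sqrt_le_sqrt key2
    _ = (1 - c * d k * (1 - d k)) * N := Real.sqrt_sq hrhs0
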